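/- In the Lipschitz quaternions Quaternion ℤ, let Y = 2 and Z = 1 + i + j + k. There is no X ∈ Quaternion ℤ such that X left-divides Y, X left-divides Z, and every W ∈ Quaternion ℤ which left-divides both Y and Z also left-divides X. (Here X left-divides A means there exists U ∈ Quaternion ℤ with A = X * U.) -/

import Mathlib

theorem no_gcd_left_two_and_one_i_j_k :
    ¬ ∃ X : Quaternion ℤ,
      (∃ U : Quaternion ℤ, (2 : Quaternion ℤ) = X * U) ∧
      (∃ U : Quaternion ℤ, (⟨1, 1, 1, 1⟩ : Quaternion ℤ) = X * U) ∧
      (∀ W : Quaternion ℤ,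
        (∃ U : Quaternion ℤ, (2 : Quaternion ℤ) = W * U) →
        (∃ U : Quaternion ℤ, (⟨1, 1, 1, 1⟩ : Quaternion ℤ) = W * U) →
        ∃ U : Quaternion ℤ, X = W * U) := by
  rintro ⟨X, ⟨U, hU⟩, ⟨V, hV⟩, hmax⟩
  have h2 : (2:Quaternion ℤ) = (⟨2,0,0,0⟩ : Quaternion ℤ) := rfl
  obtain ⟨A, hA⟩ := hmax ⟨1,1,0,0⟩
    ⟨⟨1,-1,0,0⟩, by rw [h2]; ext <;> rfl⟩
    ⟨⟨1,0,1,0⟩, by ext <;> rfl⟩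
  obtain ⟨B, hB⟩ := hmax ⟨1,0,1,0⟩
    ⟨⟨1,0,-1,0⟩, by rw [h2]; ext <;> rfl⟩
    ⟨⟨1,0,0,1⟩, by ext <;> rfl⟩
  -- component equations from hA, hB
  have hA1 := congrArg QuaternionAlgebra.re hA
  have hA2 := congrArg QuaternionAlgebra.imI hA
  have hA3 := congrArg QuaternionAlgebra.imJ hA
  have hA4 := congrArg QuaternionAlgebra.imK hA
  have hB1 := congrArg QuaternionAlgebra.re hB
  have hB3 := congrArg QuaternionAlgebra.imJ hB
  erw [Quaternion.re_mul] at hA1 hB1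
  erw [Quaternion.imI_mul] at hA2
  erw [Quaternion.imJ_mul] at hA3 hB3
  erw [Quaternion.imK_mul] at hA4
  simp only at hA1 hA2 hA3 hA4 hB1 hB3
  rcases Int.even_or_odd X.re with ⟨t, ht⟩ | ⟨t, ht⟩
  · -- even case: all components even, contradicts re of ⟨1,1,1,1⟩ = X * V
    have ht' : X.re = 2*t := by omega
    obtain ⟨u, hu⟩ : ∃ u, X.imI = 2*u := ⟨A.imI + t, by omega⟩
    obtain ⟨v, hv⟩ : ∃ v, X.imJ = 2*v := ⟨B.imJ + t, by omega⟩
    obtain ⟨w, hw⟩ : ∃ w, X.imK = 2*w := ⟨A.imK + v, by omega⟩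
    have hV1 := congrArg QuaternionAlgebra.re hV
    simp only [Quaternion.re_mul] at hV1
    have h1 : (1:ℤ) = 2*(t*V.re - u*V.imI - v*V.imJ - w*V.imK) := by
      linear_combination hV1 + V.re*ht' - V.imI*hu - V.imJ*hv - V.imK*hw
    obtain ⟨s, hs⟩ : ∃ s:ℤ, (1:ℤ) = 2*s := ⟨_, h1⟩
    omega
  · -- odd case: all components odd
    have ho : Odd X.re := ⟨t, ht⟩
    have hbo : Odd X.imI := ⟨A.imI + t, by omega⟩
    have hco : Odd X.imJ := ⟨B.imJ + t, by omega⟩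
    have hdo : Odd X.imK := by
      rcases hco with ⟨m, hm⟩
      exact ⟨m + A.imK, by omega⟩
    -- normSq X = 4
    have hnorm := congrArg Quaternion.normSq hU
    rw [map_mul] at hnorm
    have h2n : Quaternion.normSq (2:Quaternion ℤ) = 4 := by
      rw [show (2:Quaternion ℤ) = ((2:ℤ):Quaternion ℤ) from rfl,
        Quaternion.normSq_intCast]; norm_num
    rw [h2n] at hnorm
    have hle : Quaternion.normSq X ≤ 4 :=
      Int.le_of_dvd (by norm_num) ⟨Quaternion.normSq U, hnorm⟩
    have hXn : Quaternion.normSq X = X.re^2 + X.imI^2 + X.imJ^2 + X.imK^2 :=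
      Quaternion.normSq_def' X
    have hmod : Quaternion.normSq X % 4 = 0 := by
      have q1 := Int.sq_mod_four_eq_one_of_odd ho
      have q2 := Int.sq_mod_four_eq_one_of_odd hbo
      have q3 := Int.sq_mod_four_eq_one_of_odd hco
      have q4 := Int.sq_mod_four_eq_one_of_odd hdo
      omega
    have hnn : 0 ≤ Quaternion.normSq X := Quaternion.normSq_nonneg
    have hne : Quaternion.normSq X ≠ 0 := by
      intro h; rw [h, zero_mul] at hnorm; exact absurd hnorm (by norm_num)
    have hn4 : Quaternion.normSq X = 4 := by omega
    -- star X * 2 = 4 * U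
    have hstar : (star X) * (2:Quaternion ℤ) = ((4:ℤ) : Quaternion ℤ) * U := by
      rw [hU, ← mul_assoc, Quaternion.star_mul_self, hn4]; rfl
    have h4 : ((4:ℤ) : Quaternion ℤ) = (⟨4,0,0,0⟩ : Quaternion ℤ) := rfl
    have hre := congrArg QuaternionAlgebra.re hstar
    rw [h2, h4] at hre
    erw [Quaternion.re_mul, Quaternion.re_mul] at hre
    simp only [Quaternion.re_star, Quaternion.imI_star,
      Quaternion.imJ_star, Quaternion.imK_star] at hre
    omega
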